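/- Higher-priority users select weakly larger apertures: assume the metrics m_1 < m_2 < … < m_n are strictly increasing (so in particular pairwise distinct), and let 0 < ω ≤ ω'. Let x*(ω) and x*(ω') denote the unique maximizers on C of f_ω and f_{ω'}, respectively, where f_ω(x) = ω·β·log(g(x)) − Σ_{i=1}^n (λ + β·ψ_i)·x_i. Then x*(ω)_i ≤ x*(ω')_i for every i ∈ {1,…,n}. -/

import Mathlib

/-- Sum over an update of one coordinate. -/
private lemma sum_update_mul {n : ℕ} (F v : Fin n → ℝ) (i : Fin n) (t : ℝ) :
    ∑ k, F k * Function.update v i t k = ∑ k, F k * v k + F i * (t - v i) := by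
  have h : (fun k => F k * Function.update v i t k)
      = Function.update (fun k => F k * v k) i (F i * t) := by
    funext k
    by_cases hk : k = i
    · subst hk; simp
    · simp [Function.update_of_ne hk]
  rw [h, Finset.sum_update_of_mem (Finset.mem_univ i)]
  have h2 : ∑ x ∈ Finset.univ \ {i}, F x * v x = (∑ k, F k * v k) - F i * v i := by
    rw [Finset.sum_sdiff_eq_sub (Finset.singleton_subset_iff.2 (Finset.mem_univ i)),
        Finset.sum_singleton]
  rw [h2]
  ring

/-- `log b - log a ≥ (b-a)/b` for positive `a b`. -/
private lemma log_sub_log_ge {a b : ℝ} (ha : 0 < a) (hb : 0 < b) :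
    (b - a) / b ≤ Real.log b - Real.log a := by
  have h := Real.log_le_sub_one_of_pos (div_pos ha hb)
  rw [Real.log_div ha.ne' hb.ne'] at h
  have : a / b - 1 = -((b - a) / b) := by field_simp; ring
  linarith

/-- `log b - log a ≤ (b-a)/a` for positive `a b`. -/
private lemma log_sub_log_le {a b : ℝ} (ha : 0 < a) (hb : 0 < b) :
    Real.log b - Real.log a ≤ (b - a) / a := by
  have h := Real.log_le_sub_one_of_pos (div_pos hb ha)
  rw [Real.log_div hb.ne' ha.ne'] at h
  have : b / a - 1 = (b - a) / a := by field_simp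
  linarith

/-- First-order optimality conditions at a maximizer of
`A * log (1 + S0 + ∑ S k * y k) - ∑ c k * y k` over the box `[0,1]^n`. -/
private lemma foc {n : ℕ} (A S0 : ℝ) (hA : 0 < A) (hS0 : 0 ≤ S0)
    (S c : Fin n → ℝ) (hS : ∀ k, 0 < S k) (hc : ∀ k, 0 ≤ c k)
    (x : Fin n → ℝ) (hxC : ∀ k, x k ∈ Set.Icc (0:ℝ) 1)
    (hmax : ∀ y : Fin n → ℝ, (∀ k, y k ∈ Set.Icc (0:ℝ) 1) →
      A * Real.log (1 + S0 + ∑ k, S k * y k) - ∑ k, c k * y k ≤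
      A * Real.log (1 + S0 + ∑ k, S k * x k) - ∑ k, c k * x k)
    (i : Fin n) :
    (x i < 1 → A * S i ≤ c i * (1 + S0 + ∑ k, S k * x k)) ∧
    (0 < x i → c i * (1 + S0 + ∑ k, S k * x k) ≤ A * S i) := by
  set G : ℝ := 1 + S0 + ∑ k, S k * x k with hGdef
  have hsum0 : 0 ≤ ∑ k, S k * x k :=
    Finset.sum_nonneg fun k _ => mul_nonneg (hS k).le (hxC k).1
  have hG1 : 1 ≤ G := by simp only [hGdef]; linarith
  have hGpos : 0 < G := by linarith
  have hterm : S i * x i ≤ ∑ k, S k * x k :=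
    Finset.single_le_sum (f := fun k => S k * x k)
      (fun k _ => mul_nonneg (hS k).le (hxC k).1) (Finset.mem_univ i)
  constructor
  · -- x i < 1 case: increasing coordinate i is not profitable
    intro hxi1
    -- step: for all small Δ > 0, A * S i ≤ c i * (G + S i * Δ)
    have step : ∀ Δ : ℝ, 0 < Δ → x i + Δ ≤ 1 → A * S i ≤ c i * (G + S i * Δ) := by
      intro Δ hΔ hΔ1
      set y : Fin n → ℝ := Function.update x i (x i + Δ) with hy
      have hyC : ∀ k, y k ∈ Set.Icc (0:ℝ) 1 := by
        intro k
        by_cases hk : k = i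
        · rw [hk]
          simp only [hy, Function.update_self]
          exact ⟨by linarith [(hxC i).1], hΔ1⟩
        · simpa [hy, Function.update_of_ne hk] using hxC k
      have hSy : ∑ k, S k * y k = (∑ k, S k * x k) + S i * Δ := by
        rw [hy, sum_update_mul]; ring
      have hcy : ∑ k, c k * y k = (∑ k, c k * x k) + c i * Δ := by
        rw [hy, sum_update_mul]; ring
      have h1 := hmax y hyC
      rw [hSy, hcy] at h1
      have hGy : (1 : ℝ) + S0 + ((∑ k, S k * x k) + S i * Δ) = G + S i * Δ := by
        rw [hGdef]; ring
      rw [hGy] at h1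
      have hGypos : 0 < G + S i * Δ := by nlinarith [hS i]
      have hlog : (S i * Δ) / (G + S i * Δ) ≤ Real.log (G + S i * Δ) - Real.log G := by
        have := log_sub_log_ge hGpos hGypos
        simpa using this
      have h2 : A * (Real.log (G + S i * Δ) - Real.log G) ≤ c i * Δ := by linarith
      have h3 : A * ((S i * Δ) / (G + S i * Δ)) ≤ c i * Δ := by
        have := mul_le_mul_of_nonneg_left hlog hA.le
        linarith
      rw [mul_div_assoc'] at h3
      rw [div_le_iff₀ hGypos] at h3
      -- h3 : A * (S i * Δ) ≤ c i * Δ * (G + S i * Δ); divide by Δ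
      nlinarith [h3, hΔ]
    by_contra hcon
    push_neg at hcon
    set ε : ℝ := A * S i - c i * G with hε
    have hεpos : 0 < ε := by linarith
    have hden : 0 < c i * S i + 1 := by nlinarith [hc i, hS i]
    set Δ : ℝ := min (1 - x i) (ε / (c i * S i + 1)) with hΔdef
    have hΔpos : 0 < Δ := lt_min (by linarith) (div_pos hεpos hden)
    have hΔ1 : x i + Δ ≤ 1 := by
      have := min_le_left (1 - x i) (ε / (c i * S i + 1))
      linarith
    have hΔ2 : Δ ≤ ε / (c i * S i + 1) := min_le_right _ _
    have hkey := step Δ hΔpos hΔ1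
    have hsmall : c i * S i * Δ < ε := by
      have h5 : c i * S i * Δ ≤ c i * S i * (ε / (c i * S i + 1)) :=
        mul_le_mul_of_nonneg_left hΔ2 (mul_nonneg (hc i) (hS i).le)
      have h6 : c i * S i * (ε / (c i * S i + 1)) < ε := by
        rw [mul_div_assoc']
        rw [div_lt_iff₀ hden]
        nlinarith
      linarith
    nlinarith [hkey]
  · -- 0 < x i case: decreasing coordinate i is not profitable
    intro hxi0
    have step : ∀ Δ : ℝ, 0 < Δ → Δ ≤ x i → c i * (G - S i * Δ) ≤ A * S i := by
      intro Δ hΔ hΔ1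
      set y : Fin n → ℝ := Function.update x i (x i - Δ) with hy
      have hyC : ∀ k, y k ∈ Set.Icc (0:ℝ) 1 := by
        intro k
        by_cases hk : k = i
        · rw [hk]
          simp only [hy, Function.update_self]
          exact ⟨by linarith [(hxC i).1], by linarith [(hxC i).2]⟩
        · simpa [hy, Function.update_of_ne hk] using hxC k
      have hSy : ∑ k, S k * y k = (∑ k, S k * x k) - S i * Δ := by
        rw [hy, sum_update_mul]; ring
      have hcy : ∑ k, c k * y k = (∑ k, c k * x k) - c i * Δ := by
        rw [hy, sum_update_mul]; ring
      have h1 := hmax y hyC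
      rw [hSy, hcy] at h1
      have hGy : (1 : ℝ) + S0 + ((∑ k, S k * x k) - S i * Δ) = G - S i * Δ := by
        rw [hGdef]; ring
      rw [hGy] at h1
      have hGypos : 0 < G - S i * Δ := by
        have : S i * Δ ≤ S i * x i := mul_le_mul_of_nonneg_left hΔ1 (hS i).le
        simp only [hGdef]
        nlinarith
      have hlog : Real.log G - Real.log (G - S i * Δ) ≤ (S i * Δ) / (G - S i * Δ) := by
        have := log_sub_log_le hGypos hGpos
        have heq : G - (G - S i * Δ) = S i * Δ := by ring
        rw [heq] at this
        linarith
      have h2 : c i * Δ ≤ A * (Real.log G - Real.log (G - S i * Δ)) := by linarith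
      have h3 : c i * Δ ≤ A * ((S i * Δ) / (G - S i * Δ)) := by
        have := mul_le_mul_of_nonneg_left hlog hA.le
        linarith
      rw [show A * (S i * Δ / (G - S i * Δ)) = A * (S i * Δ) / (G - S i * Δ) by ring,
          le_div_iff₀ hGypos] at h3
      -- h3 : c i * Δ * (G - S i * Δ) ≤ A * (S i * Δ); divide by Δ
      nlinarith [h3, hΔ]
    by_contra hcon
    push_neg at hcon
    set ε : ℝ := c i * G - A * S i with hε
    have hεpos : 0 < ε := by linarith
    have hden : 0 < c i * S i + 1 := by nlinarith [hc i, hS i]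
    set Δ : ℝ := min (x i) (ε / (c i * S i + 1)) with hΔdef
    have hΔpos : 0 < Δ := lt_min hxi0 (div_pos hεpos hden)
    have hΔ1 : Δ ≤ x i := min_le_left _ _
    have hΔ2 : Δ ≤ ε / (c i * S i + 1) := min_le_right _ _
    have hkey := step Δ hΔpos hΔ1
    have hsmall : c i * S i * Δ < ε := by
      have h5 : c i * S i * Δ ≤ c i * S i * (ε / (c i * S i + 1)) :=
        mul_le_mul_of_nonneg_left hΔ2 (mul_nonneg (hc i) (hS i).le)
      have h6 : c i * S i * (ε / (c i * S i + 1)) < ε := by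
        rw [mul_div_assoc']
        rw [div_lt_iff₀ hden]
        nlinarith
      linarith
    nlinarith [hkey]

/- STATEMENT 9: higher-priority users select weakly larger apertures.
   With strictly increasing metrics (strict monotonicity is independent of the
   positive factor ω, so it is stated for the weight ω), and 0 < ω ≤ ω', the
   maximizers x*(ω) of f_ω and x*(ω') of f_{ω'} on C = [0,1]^n (unique under
   the distinct-metrics hypothesis) satisfy x*(ω)_i ≤ x*(ω')_i for all i. -/
theorem higher_priority_larger_aperture
    (n : ℕ) (hn : 1 ≤ n)
    (β lam S0 : ℝ) (hβ : 0 < β) (hlam : 0 ≤ lam) (hS0 : 0 ≤ S0)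
    (S ψ : Fin n → ℝ) (hS : ∀ i, 0 < S i) (hψ : ∀ i, 0 ≤ ψ i)
    (ω ω' : ℝ) (hω : 0 < ω) (hωω' : ω ≤ ω')
    (g : (Fin n → ℝ) → ℝ) (hg : ∀ x, g x = 1 + S0 + ∑ i, S i * x i)
    (m : Fin n → ℝ) (hm : ∀ i, m i = (β * ψ i + lam) / (ω * β * S i))
    (hmono : StrictMono m)
    (f f' : (Fin n → ℝ) → ℝ)
    (hf : ∀ x, f x = ω * β * Real.log (g x) - ∑ i, (lam + β * ψ i) * x i)
    (hf' : ∀ x, f' x = ω' * β * Real.log (g x) - ∑ i, (lam + β * ψ i) * x i)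
    (x x' : Fin n → ℝ)
    (hxC : ∀ i, x i ∈ Set.Icc (0:ℝ) 1)
    (hx'C : ∀ i, x' i ∈ Set.Icc (0:ℝ) 1)
    (hxmax : ∀ y : Fin n → ℝ, (∀ i, y i ∈ Set.Icc (0:ℝ) 1) → f y ≤ f x)
    (hx'max : ∀ y : Fin n → ℝ, (∀ i, y i ∈ Set.Icc (0:ℝ) 1) → f' y ≤ f' x') :
    ∀ i, x i ≤ x' i := by
  set c : Fin n → ℝ := fun k => lam + β * ψ k with hcdef
  have hc : ∀ k, 0 ≤ c k := fun k => by
    have := hψ k; simp only [hcdef]; nlinarith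
  have hω' : 0 < ω' := lt_of_lt_of_le hω hωω'
  have hA : 0 < ω * β := mul_pos hω hβ
  have hA' : 0 < ω' * β := mul_pos hω' hβ
  -- restated maximality
  have hxmax2 : ∀ y : Fin n → ℝ, (∀ k, y k ∈ Set.Icc (0:ℝ) 1) →
      (ω * β) * Real.log (1 + S0 + ∑ k, S k * y k) - ∑ k, c k * y k ≤
      (ω * β) * Real.log (1 + S0 + ∑ k, S k * x k) - ∑ k, c k * x k := by
    intro y hy
    have := hxmax y hy
    simpa only [hf, hg, hcdef] using this
  have hx'max2 : ∀ y : Fin n → ℝ, (∀ k, y k ∈ Set.Icc (0:ℝ) 1) →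
      (ω' * β) * Real.log (1 + S0 + ∑ k, S k * y k) - ∑ k, c k * y k ≤
      (ω' * β) * Real.log (1 + S0 + ∑ k, S k * x' k) - ∑ k, c k * x' k := by
    intro y hy
    have := hx'max y hy
    simpa only [hf', hg, hcdef] using this
  set Gx : ℝ := 1 + S0 + ∑ k, S k * x k with hGxdef
  set Gx' : ℝ := 1 + S0 + ∑ k, S k * x' k with hGx'def
  have hGxpos : 0 < Gx := by
    have : 0 ≤ ∑ k, S k * x k :=
      Finset.sum_nonneg fun k _ => mul_nonneg (hS k).le (hxC k).1
    simp only [hGxdef]; linarith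
  have hGx'pos : 0 < Gx' := by
    have : 0 ≤ ∑ k, S k * x' k :=
      Finset.sum_nonneg fun k _ => mul_nonneg (hS k).le (hx'C k).1
    simp only [hGx'def]; linarith
  have hfocx := foc (ω * β) S0 hA hS0 S c hS hc x hxC hxmax2
  have hfocx' := foc (ω' * β) S0 hA' hS0 S c hS hc x' hx'C hx'max2
  by_contra hcon
  push_neg at hcon
  obtain ⟨i, hi⟩ := hcon
  -- facts at coordinate i
  have hxi_pos : 0 < x i := lt_of_le_of_lt (hx'C i).1 hi
  have hx'i_lt1 : x' i < 1 := lt_of_lt_of_le hi (hxC i).2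
  have hfi1 : c i * Gx ≤ (ω * β) * S i := (hfocx i).2 hxi_pos
  have hfi2 : (ω' * β) * S i ≤ c i * Gx' := (hfocx' i).1 hx'i_lt1
  have hci_pos : 0 < c i := by
    by_contra hci
    push_neg at hci
    have : c i = 0 := le_antisymm hci (hc i)
    rw [this] at hfi2
    nlinarith [hS i]
  by_cases hex : ∃ j, x j < x' j
  · obtain ⟨j, hj⟩ := hex
    have hxj_lt1 : x j < 1 := lt_of_lt_of_le hj (hx'C j).2
    have hx'j_pos : 0 < x' j := lt_of_le_of_lt (hxC j).1 hj
    have hfj1 : (ω * β) * S j ≤ c j * Gx := (hfocx j).1 hxj_lt1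
    have hfj2 : c j * Gx' ≤ (ω' * β) * S j := (hfocx' j).2 hx'j_pos
    have hcj_pos : 0 < c j := by
      by_contra hcj
      push_neg at hcj
      have : c j = 0 := le_antisymm hcj (hc j)
      rw [this] at hfj1
      nlinarith [hS j]
    -- derive ω' * Gx = ω * Gx'
    have hPQeq : ω' * Gx = ω * Gx' := by
      have t1 := mul_le_mul_of_nonneg_left hfi1 hω'.le
      have t2 := mul_le_mul_of_nonneg_left hfi2 hω.le
      have h3 : c i * (ω' * Gx) ≤ c i * (ω * Gx') := by linarith only [t1, t2]
      have hPQ : ω' * Gx ≤ ω * Gx' := le_of_mul_le_mul_left h3 hci_pos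
      have t3 := mul_le_mul_of_nonneg_left hfj2 hω.le
      have t4 := mul_le_mul_of_nonneg_left hfj1 hω'.le
      have h4 : c j * (ω * Gx') ≤ c j * (ω' * Gx) := by linarith only [t3, t4]
      have hQP : ω * Gx' ≤ ω' * Gx := le_of_mul_le_mul_left h4 hcj_pos
      linarith
    -- exact stationarity at i and j
    have hieq : c i * Gx = (ω * β) * S i := by
      have t := mul_le_mul_of_nonneg_left hfi2 hω.le
      have e : c i * (ω' * Gx) = c i * (ω * Gx') := by rw [hPQeq]
      have h5 : ω' * ((ω * β) * S i) ≤ ω' * (c i * Gx) := by linarith only [t, e]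
      have h6 : (ω * β) * S i ≤ c i * Gx := le_of_mul_le_mul_left h5 hω'
      linarith
    have hjeq : c j * Gx = (ω * β) * S j := by
      have t := mul_le_mul_of_nonneg_left hfj2 hω.le
      have e : c j * (ω' * Gx) = c j * (ω * Gx') := by rw [hPQeq]
      have h5 : ω' * (c j * Gx) ≤ ω' * ((ω * β) * S j) := by linarith only [t, e]
      have h6 : c j * Gx ≤ (ω * β) * S j := le_of_mul_le_mul_left h5 hω'
      linarith
    -- metrics coincide: m i = 1/Gx = m j
    have hSi := hS i
    have hSj := hS j
    have hmi : m i * Gx = 1 := by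
      rw [hm i]
      have hnum : β * ψ i + lam = c i := by simp only [hcdef]; ring
      rw [hnum]
      rw [div_mul_eq_mul_div, show ω * β * S i = c i * Gx from hieq.symm]
      rw [div_self]
      positivity
    have hmj : m j * Gx = 1 := by
      rw [hm j]
      have hnum : β * ψ j + lam = c j := by simp only [hcdef]; ring
      rw [hnum]
      rw [div_mul_eq_mul_div, show ω * β * S j = c j * Gx from hjeq.symm]
      rw [div_self]
      positivity
    have hij : m i = m j := mul_right_cancel₀ hGxpos.ne' (hmi.trans hmj.symm)
    have : i = j := hmono.injective hij
    subst this
    linarith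
  · -- x' ≤ x everywhere, strict at i ⇒ Gx' < Gx, contradiction
    push_neg at hex
    have hsum : ∑ k, S k * x' k < ∑ k, S k * x k := by
      apply Finset.sum_lt_sum
      · intro k _
        exact mul_le_mul_of_nonneg_left (hex k) (hS k).le
      · exact ⟨i, Finset.mem_univ i, mul_lt_mul_of_pos_left hi (hS i)⟩
    have hGlt : Gx' < Gx := by rw [hGxdef, hGx'def]; linarith
    -- c i * Gx ≤ ω β S i ≤ ω' β S i ≤ c i * Gx' < c i * Gx
    have h1 : (ω * β) * S i ≤ (ω' * β) * S i :=
      mul_le_mul_of_nonneg_right (mul_le_mul_of_nonneg_right hωω' hβ.le) (hS i).le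
    have h2 : c i * Gx' < c i * Gx := mul_lt_mul_of_pos_left hGlt hci_pos
    linarith
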